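/- Let u and v be words such that v is u-free (no substitution image of u is a factor of v). Then the flat semiring S(v) satisfies the identities u x ≈ u and x u ≈ u, where x is a variable not occurring in u; that is, for every assignment of elements of S(v) to the variables, the evaluation of u in S(v) is an absorbing element times anything, i.e., the evaluation of u equals 0 or forces ux = xu = u. -/

import Mathlib

variable {α : Type*} [DecidableEq α]

/-- The carrier of the flat semiring `S(w)`: nonempty factors of `w` plus `0 = none`. -/
def SW (w : List α) : Type _ := Option {u : List α // u ≠ [] ∧ u <:+: w}

/-- Multiplication on `S(w)`: concatenation when the result is a factor of `w`,
and `0` otherwise. -/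
def swMul (w : List α) : SW w → SW w → SW w
  | some u, some v =>
      if h : (u.1 ++ v.1) <:+: w then
        some ⟨u.1 ++ v.1, ⟨by simp [u.2.1], h⟩⟩
      else none
  | _, _ => none

/-- Evaluate a (nonempty) word in variables `V` in a magma `(S, mul)` under the
assignment `φ`; the empty word is sent to the junk value `z`. -/
def evalWith {S V : Type*} (mul : S → S → S) (z : S) (φ : V → S) : List V → S
  | [] => z
  | h :: t => t.foldl (fun s v => mul s (φ v)) (φ h)

lemma swMul_none_left (w : List α) (s : SW w) : swMul w none s = none := by
  cases s <;> rfl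

lemma foldl_none {V : Type*} (w : List α) (φ : V → SW w) (l : List V) :
    List.foldl (fun s y => swMul w s (φ y)) none l = none := by
  induction l with
  | nil => rfl
  | cons h t ih =>
    show List.foldl _ (swMul w none (φ h)) t = none
    rw [swMul_none_left, ih]

lemma foldl_some {V : Type*} (w : List α) (φ : V → SW w) (d : List α)
    (ψ : V → List α)
    (hψ : ∀ y, ψ y = (Option.map Subtype.val (φ y)).getD d)
    (l : List V) (a : {u : List α // u ≠ [] ∧ u <:+: w}) :
    List.foldl (fun s y => swMul w s (φ y)) (some a) l = none ∨
    ∃ h, List.foldl (fun s y => swMul w s (φ y)) (some a) l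
        = some ⟨a.1 ++ l.flatMap ψ, h⟩ := by
  induction l generalizing a with
  | nil => right; exact ⟨⟨by simp [a.2.1], by simpa using a.2.2⟩, by show some a = _; exact congrArg some (Subtype.ext (by simp))⟩
  | cons h t ih =>
      rcases hb : φ h with _ | b
      · left
        show List.foldl _ (swMul w (some a) (φ h)) t = none
        rw [hb]
        show List.foldl _ (swMul w (some a) none) t = none
        exact foldl_none w φ t
      · show (List.foldl (fun s y => swMul w s (φ y)) (swMul w (some a) (φ h)) t = none) ∨
          ∃ h', List.foldl (fun s y => swMul w s (φ y)) (swMul w (some a) (φ h)) t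
            = some ⟨a.1 ++ (h :: t).flatMap ψ, h'⟩
        rw [hb]
        show (List.foldl _ (swMul w (some a) (some b)) t = none) ∨ _
        have e : swMul w (some a) (some b) = (if h : (a.1 ++ b.1) <:+: w then
            some ⟨a.1 ++ b.1, ⟨by simp [a.2.1], h⟩⟩ else none) := rfl
        rw [e]
        split
        · rcases ih ⟨a.1 ++ b.1, ⟨by simp [a.2.1], by assumption⟩⟩ with h1 | ⟨hf, h1⟩
          · left; exact h1
          · right
            refine ⟨?_, ?_⟩
            · simpa [List.flatMap_cons, hψ, hb, List.append_assoc] using hf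
            · rw [h1]
              congr 1
              apply Subtype.ext
              simp [List.flatMap_cons, hψ, hb, List.append_assoc]
        · left; exact foldl_none w φ t

/-- If `v` is `u`-free, then in the flat semiring `S(v)` every evaluation of `u`
is `0`, and hence `S(v)` satisfies the identities `ux ≈ u` and `xu ≈ u` for a
fresh variable `x`. -/
theorem stmt11 {V : Type*} (v : List α) (u : List V) (hu : u ≠ [])
    (hfree : ∀ ψ : V → List α, (∀ y, ψ y ≠ []) → ¬ (u.flatMap ψ <:+: v))
    (x : V) (hx : x ∉ u) :
    ∀ φ : V → SW v,
      evalWith (swMul v) none φ u = none ∧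
      evalWith (swMul v) none φ (u ++ [x]) = evalWith (swMul v) none φ u ∧
      evalWith (swMul v) none φ ([x] ++ u) = evalWith (swMul v) none φ u := by
  intro φ
  obtain ⟨h, t, rfl⟩ : ∃ h t, u = h :: t := by
    cases u with
    | nil => exact absurd rfl hu
    | cons h t => exact ⟨h, t, rfl⟩
  have key : ∀ (init : SW v),
      List.foldl (fun s y => swMul v s (φ y)) init (h :: t) = none := by
    intro init
    rcases init with _ | a
    · exact foldl_none v φ _
    · set ψ : V → List α := fun y => (Option.map Subtype.val (φ y)).getD a.1 with hψdef
      have hψne : ∀ y, ψ y ≠ [] := by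
        intro y
        rcases hy : φ y with _ | c
        · simp [hψdef, hy, a.2.1]
        · simp [hψdef, hy, c.2.1]
      rcases foldl_some v φ a.1 ψ (fun y => rfl) (h :: t) a with h1 | ⟨hf, h1⟩
      · exact h1
      · exfalso
        exact hfree ψ hψne ((List.suffix_append a.1 _).isInfix.trans hf.2)
  have heval : evalWith (swMul v) none φ (h :: t) = none := by
    show List.foldl (fun s y => swMul v s (φ y)) (φ h) t = none
    rcases hb : φ h with _ | b
    · exact foldl_none v φ t
    · set ψ : V → List α := fun y => (Option.map Subtype.val (φ y)).getD b.1 with hψdef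
      have hψne : ∀ y, ψ y ≠ [] := by
        intro y
        rcases hy : φ y with _ | c
        · simp [hψdef, hy, b.2.1]
        · simp [hψdef, hy, c.2.1]
      rcases foldl_some v φ b.1 ψ (fun y => rfl) t b with h1 | ⟨hf, h1⟩
      · exact h1
      · exfalso
        apply hfree ψ hψne
        have : (h :: t).flatMap ψ = b.1 ++ t.flatMap ψ := by
          simp [List.flatMap_cons, hψdef, hb]
        rw [this]
        exact hf.2
  refine ⟨heval, ?_, ?_⟩
  · rw [heval]
    show List.foldl (fun s y => swMul v s (φ y)) (φ h) (t ++ [x]) = none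
    rw [List.foldl_append]
    have : List.foldl (fun s y => swMul v s (φ y)) (φ h) t = none := heval
    rw [this]
    exact foldl_none v φ [x]
  · rw [heval]
    show List.foldl (fun s y => swMul v s (φ y)) (φ x) (h :: t) = none
    exact key (φ x)
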